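/- Existence and regularity of dual maximizers: if (Ω,d) is a compact metric space, each pairwise term f_e : Ω×Ω → ℝ is continuous admitting a modulus of continuity ω_e, and each f_u : Ω → ℝ is lower semicontinuous, then there exists a maximizer (φ,ψ) ∈ C(Ω)^E × C(Ω)^E of (R-D) such that for every edge e, φ_e is f_e-concave and ψ_e = (φ_e)^{f_e} is the f_e-transform of φ_e; in particular φ_e and ψ_e both admit the modulus of continuity ω_e. -/
import Mathlib


open MeasureTheory

/-- The linear map `A_u(φ, ψ) = -∑_{v : (u,v) ∈ E} φ_{(u,v)} - ∑_{v : (v,u) ∈ E} ψ_{(v,u)}`. -/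
noncomputable def Afun {Ω : Type*} [TopologicalSpace Ω] {V : Type*} [DecidableEq V]
    (E : Finset (V × V)) (φ ψ : V × V → C(Ω, ℝ)) (u : V) : C(Ω, ℝ) :=
  (-∑ e ∈ E.filter (fun e => e.1 = u), φ e) - ∑ e ∈ E.filter (fun e => e.2 = u), ψ e

/-- `φ` is `c`-concave: `φ x = inf_y (c x y - g y)` for some `g`. -/
def IsCConcave {Ω : Type*} (c : Ω → Ω → ℝ) (φ : Ω → ℝ) : Prop :=
  ∃ g : Ω → ℝ, ∀ x : Ω, φ x = ⨅ y : Ω, (c x y - g y)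

open Set

set_option linter.unusedSectionVars false
set_option linter.unusedVariables false


section Aux
variable {Ω : Type*} [MetricSpace Ω] [CompactSpace Ω] [Nonempty Ω]

/-- lsc functions on a compact space are bounded below. -/
lemma lsc_bddBelow {f : Ω → ℝ} (hf : LowerSemicontinuous f) : ∃ b : ℝ, ∀ x, b ≤ f x := by
  have hcov : (univ : Set Ω) ⊆ ⋃ n : ℕ, f ⁻¹' Ioi (-(n : ℝ)) := by
    intro x _
    obtain ⟨n, hn⟩ := exists_nat_gt (-f x)
    exact mem_iUnion.2 ⟨n, by simp only [mem_preimage, mem_Ioi]; linarith⟩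
  obtain ⟨t, ht⟩ := isCompact_univ.elim_finite_subcover _
    (fun n : ℕ => hf.isOpen_preimage (-(n : ℝ))) hcov
  rcases t.eq_empty_or_nonempty with h | h
  · exfalso
    have := ht (mem_univ (Classical.arbitrary Ω))
    subst h
    simpa using this
  · refine ⟨-(t.max' h : ℕ), fun x => ?_⟩
    obtain ⟨n, hn, hx⟩ := mem_iUnion₂.1 (ht (mem_univ x))
    simp only [mem_preimage, mem_Ioi] at hx
    have : (n : ℝ) ≤ (t.max' h : ℕ) := Nat.cast_le.2 (t.le_max' n hn)
    linarith

/-- A function with a modulus of continuity is continuous. -/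
lemma continuous_of_modulus {ω : ℝ → ℝ} (h0 : ω 0 = 0) (hcont : ContinuousAt ω 0)
    {h : Ω → ℝ} (hh : ∀ x y, |h x - h y| ≤ ω (dist x y)) : Continuous h := by
  rw [Metric.continuous_iff]
  intro b ε hε
  have hten : Filter.Tendsto ω (nhds 0) (nhds 0) := by have := hcont.tendsto; rwa [h0] at this
  rcases Metric.tendsto_nhds_nhds.1 hten ε hε with ⟨δ, hδ0, hδ⟩
  refine ⟨δ, hδ0, fun a hab => ?_⟩
  have h1 : dist (ω (dist a b)) 0 < ε := hδ (by simpa [Real.dist_eq, abs_dist] using hab)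
  calc dist (h a) (h b) = |h a - h b| := Real.dist_eq _ _
    _ ≤ ω (dist a b) := hh a b
    _ ≤ |ω (dist a b)| := le_abs_self _
    _ = dist (ω (dist a b)) 0 := by simp [Real.dist_eq]
    _ < ε := h1

lemma omega_nonneg {ω : ℝ → ℝ} (hmono : MonotoneOn ω (Set.Ici (0:ℝ))) (h0 : ω 0 = 0)
    {t : ℝ} (ht : 0 ≤ t) : 0 ≤ ω t :=
  h0 ▸ hmono (le_refl (0:ℝ)) ht ht

end Aux

section Trans
variable {Ω : Type*} [MetricSpace Ω] [CompactSpace Ω] [Nonempty Ω]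

noncomputable def ctrans (c : Ω → Ω → ℝ) (φ : Ω → ℝ) : Ω → ℝ := fun y => ⨅ x, (c x y - φ x)

variable {c : Ω → Ω → ℝ} {φ : Ω → ℝ} {K M : ℝ}

lemma bddBelow_ctrans_range (hcb : ∀ x y, |c x y| ≤ K) (hφ : ∀ x, |φ x| ≤ M) (y : Ω) :
    BddBelow (range fun x => c x y - φ x) := by
  refine ⟨-K - M, fun r ⟨x, hx⟩ => ?_⟩
  have h1 := abs_le.1 (hcb x y)
  have h2 := abs_le.1 (hφ x)
  simp only [← hx]; linarith [h1.1, h2.2]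

lemma ctrans_le (hcb : ∀ x y, |c x y| ≤ K) (hφ : ∀ x, |φ x| ≤ M) (x y : Ω) :
    ctrans c φ y ≤ c x y - φ x :=
  ciInf_le (bddBelow_ctrans_range hcb hφ y) x

lemma le_ctrans {b : ℝ} {y : Ω} (h : ∀ x, b ≤ c x y - φ x) : b ≤ ctrans c φ y :=
  le_ciInf h

lemma ctrans_modulus {ω : ℝ → ℝ} (hcb : ∀ x y, |c x y| ≤ K) (hφ : ∀ x, |φ x| ≤ M)
    (hωc : ∀ p q : Ω × Ω, |c p.1 p.2 - c q.1 q.2| ≤ ω (dist p q)) (y y' : Ω) :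
    |ctrans c φ y - ctrans c φ y'| ≤ ω (dist y y') := by
  have key : ∀ z z' : Ω, ctrans c φ z ≤ ctrans c φ z' + ω (dist z z') := by
    intro z z'
    rw [← sub_le_iff_le_add]
    refine le_ctrans fun x => ?_
    have h1 : ctrans c φ z ≤ c x z - φ x := ctrans_le hcb hφ x z
    have h2 : c x z - c x z' ≤ ω (dist ((x, z) : Ω × Ω) ((x, z') : Ω × Ω)) :=
      le_trans (le_abs_self _) (hωc (x, z) (x, z'))
    have h3 : dist ((x, z) : Ω × Ω) ((x, z') : Ω × Ω) = dist z z' := by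
      rw [Prod.dist_eq]; simp [max_eq_right dist_nonneg]
    rw [h3] at h2; linarith
  rw [abs_sub_le_iff]
  constructor
  · have := key y y'; linarith
  · have := key y' y; rw [dist_comm] at this; linarith

lemma ctrans_bound (hcb : ∀ x y, |c x y| ≤ K) (hφ : ∀ x, |φ x| ≤ M) (y : Ω) :
    |ctrans c φ y| ≤ K + M := by
  rw [abs_le]
  constructor
  · refine le_ctrans fun x => ?_
    have h1 := abs_le.1 (hcb x y); have h2 := abs_le.1 (hφ x); linarith [h1.1, h2.2]
  · calc ctrans c φ y ≤ c (Classical.arbitrary Ω) y - φ _ := ctrans_le hcb hφ _ y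
      _ ≤ K + M := by
        have h1 := abs_le.1 (hcb (Classical.arbitrary Ω) y)
        have h2 := abs_le.1 (hφ (Classical.arbitrary Ω)); linarith [h1.2, h2.1]

/-- double transform dominates -/
lemma le_double_ctrans {ψ : Ω → ℝ} (hcb : ∀ x y, |c x y| ≤ K)
    (hψ : ∀ y, |ψ y| ≤ M) (hfeas : ∀ x y, φ x + ψ y ≤ c x y) (x : Ω) :
    φ x ≤ ctrans (fun a b => c b a) ψ x :=
  le_ciInf fun y => by have := hfeas x y; simp only []; linarith

/-- the triple transform identity : T (T' (T φ)) = T φ -/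
lemma triple_ctrans (hcb : ∀ x y, |c x y| ≤ K) (hφ : ∀ x, |φ x| ≤ M) (y : Ω) :
    ctrans c (ctrans (fun a b => c b a) (ctrans c φ)) y = ctrans c φ y := by
  set ψ1 := ctrans c φ with hψ1
  set φ2 := ctrans (fun a b => c b a) ψ1 with hφ2
  have hψ1b : ∀ y, |ψ1 y| ≤ K + M := ctrans_bound hcb hφ
  have hcb' : ∀ x y, |(fun a b => c b a) x y| ≤ K := fun x y => hcb y x
  have hφ2b : ∀ x, |φ2 x| ≤ K + (K + M) := ctrans_bound hcb' hψ1b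
  have hle : ∀ x, φ x ≤ φ2 x := by
    intro x
    exact le_double_ctrans hcb hψ1b (fun x y => by
      have := ctrans_le hcb hφ x y
      simp only [← hψ1] at *; linarith) x
  refine le_antisymm ?_ ?_
  · -- inf over x of c x y - φ2 x ≤ inf of c x y - φ x since φ2 ≥ φ
    refine le_ctrans fun x => ?_
    calc ctrans c φ2 y ≤ c x y - φ2 x := ctrans_le hcb hφ2b x y
      _ ≤ c x y - φ x := by linarith [hle x]
  · -- ψ1 y ≤ c x y - φ2 x for all x, since φ2 x ≤ c x y - ψ1 y
    refine le_ctrans fun x => ?_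
    have : φ2 x ≤ c x y - ψ1 y := ctrans_le hcb' hψ1b y x
    linarith

end Trans

section Val
variable {Ω : Type*} [MetricSpace Ω] [CompactSpace Ω] [Nonempty Ω]
variable {V : Type*} [Fintype V] [DecidableEq V]

lemma Afun_apply (E : Finset (V × V)) (φ ψ : V × V → C(Ω, ℝ)) (u : V) (x : Ω) :
    Afun E φ ψ u x = -(∑ e ∈ E.filter (fun e => e.1 = u), φ e x)
      - ∑ e ∈ E.filter (fun e => e.2 = u), ψ e x := by
  simp [Afun]

noncomputable def dualVal (E : Finset (V × V)) (f : V → Ω → ℝ) (φ ψ : V × V → C(Ω, ℝ)) : ℝ :=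
  ∑ u : V, sInf (Set.range fun x : Ω => f u x - Afun E φ ψ u x)

lemma bdd_fsub {F : Ω → ℝ} (hF : LowerSemicontinuous F) (g : C(Ω, ℝ)) :
    BddBelow (range fun x => F x - g x) := by
  obtain ⟨b, hb⟩ := lsc_bddBelow hF
  exact ⟨b - ‖g‖, fun r ⟨x, hx⟩ => by
    have := (abs_le.1 (g.norm_coe_le_norm x)).2
    simp only [← hx]; linarith [hb x]⟩

lemma sInf_range_mono {g h : Ω → ℝ} (hb : BddBelow (range g)) (hle : ∀ x, g x ≤ h x) :
    sInf (range g) ≤ sInf (range h) :=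
  le_csInf (range_nonempty h) fun b ⟨x, hx⟩ => hx ▸ le_trans (csInf_le hb ⟨x, rfl⟩) (hle x)

lemma sInf_range_add_const {g : Ω → ℝ} (hb : BddBelow (range g)) (k : ℝ) :
    sInf (range fun x => g x + k) = sInf (range g) + k := by
  have : (⨅ x, g x) + k = ⨅ x, (g x + k) := ciInf_add hb k
  calc sInf (range fun x => g x + k) = ⨅ x, (g x + k) := by rw [sInf_range]
    _ = (⨅ x, g x) + k := this.symm
    _ = sInf (range g) + k := by rw [iInf, sInf_range]

variable {E : Finset (V × V)} {f : V → Ω → ℝ}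

lemma dualVal_mono (hf : ∀ u, LowerSemicontinuous (f u)) {φ ψ φ' ψ' : V × V → C(Ω, ℝ)}
    (hφ : ∀ e ∈ E, ∀ x, φ e x ≤ φ' e x) (hψ : ∀ e ∈ E, ∀ x, ψ e x ≤ ψ' e x) :
    dualVal E f φ ψ ≤ dualVal E f φ' ψ' := by
  refine Finset.sum_le_sum fun u _ => ?_
  refine sInf_range_mono (bdd_fsub (hf u) _) fun x => ?_
  simp only [Afun_apply, sub_sub_eq_add_sub, sub_le_iff_le_add]
  have h1 : ∑ e ∈ E.filter (fun e => e.1 = u), φ e x ≤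
      ∑ e ∈ E.filter (fun e => e.1 = u), φ' e x :=
    Finset.sum_le_sum fun e he => hφ e (Finset.mem_filter.1 he).1 x
  have h2 : ∑ e ∈ E.filter (fun e => e.2 = u), ψ e x ≤
      ∑ e ∈ E.filter (fun e => e.2 = u), ψ' e x :=
    Finset.sum_le_sum fun e he => hψ e (Finset.mem_filter.1 he).1 x
  linarith

lemma dualVal_shift (hf : ∀ u, LowerSemicontinuous (f u)) (φ ψ : V × V → C(Ω, ℝ))
    (a : V × V → ℝ) :
    dualVal E f (fun e => φ e - ContinuousMap.const Ω (a e))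
      (fun e => ψ e + ContinuousMap.const Ω (a e)) = dualVal E f φ ψ := by
  have key : ∀ u : V, (sInf (Set.range fun x : Ω =>
      f u x - Afun E (fun e => φ e - ContinuousMap.const Ω (a e))
        (fun e => ψ e + ContinuousMap.const Ω (a e)) u x)) =
      sInf (Set.range fun x : Ω => f u x - Afun E φ ψ u x) +
        ((∑ e ∈ E.filter (fun e => e.2 = u), a e) -
         (∑ e ∈ E.filter (fun e => e.1 = u), a e)) := by
    intro u
    rw [← sInf_range_add_const (bdd_fsub (hf u) _)]
    refine congrArg sInf (congrArg Set.range (funext fun x => ?_))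
    simp only [Afun_apply, ContinuousMap.sub_apply, ContinuousMap.add_apply,
      ContinuousMap.const_apply, Finset.sum_sub_distrib, Finset.sum_add_distrib]
    ring
  unfold dualVal
  rw [Finset.sum_congr rfl fun u _ => key u, Finset.sum_add_distrib,
    Finset.sum_sub_distrib, Finset.sum_fiberwise E (fun e => e.2) a,
    Finset.sum_fiberwise E (fun e => e.1) a]
  simp

end Val
section P4
variable {Ω : Type*} [MetricSpace Ω] [CompactSpace Ω] [Nonempty Ω]
variable {V : Type*} [Fintype V] [DecidableEq V]
variable {E : Finset (V × V)} {f : V → Ω → ℝ}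

lemma continuous_dualVal (hf : ∀ u, LowerSemicontinuous (f u)) :
    Continuous fun p : (V × V → C(Ω, ℝ)) × (V × V → C(Ω, ℝ)) => dualVal E f p.1 p.2 := by
  unfold dualVal
  refine continuous_finset_sum _ fun u _ => ?_
  have hH : ∀ g g' : C(Ω, ℝ), sInf (range fun x => f u x - g x) ≤
      sInf (range fun x => f u x - g' x) + dist g g' := by
    intro g g'
    rw [← sInf_range_add_const (bdd_fsub (hf u) g')]
    refine sInf_range_mono (bdd_fsub (hf u) g) fun x => ?_
    have h2 : |g' x - g x| ≤ dist g g' := by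
      rw [← Real.dist_eq, dist_comm]; exact ContinuousMap.dist_apply_le_dist x
    have h3 := abs_le.1 h2
    linarith [h3.1, h3.2]
  have hlip : LipschitzWith 1 (fun g : C(Ω, ℝ) => sInf (range fun x => f u x - g x)) := by
    refine LipschitzWith.of_dist_le_mul fun g g' => ?_
    rw [NNReal.coe_one, one_mul, Real.dist_eq, abs_sub_le_iff]
    constructor
    · have := hH g g'; linarith
    · have := hH g' g; rw [dist_comm] at this; linarith
  have hA : Continuous fun p : (V × V → C(Ω, ℝ)) × (V × V → C(Ω, ℝ)) =>
      Afun E p.1 p.2 u := by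
    unfold Afun
    refine Continuous.sub (Continuous.neg ?_) ?_
    · exact continuous_finset_sum _ fun e _ => (continuous_apply e).comp continuous_fst
    · exact continuous_finset_sum _ fun e _ => (continuous_apply e).comp continuous_snd
  exact hlip.continuous.comp hA

lemma isCompact_modulusSet {ω : ℝ → ℝ} (hmono : MonotoneOn ω (Ici (0:ℝ))) (h0 : ω 0 = 0)
    (hcont : ContinuousAt ω 0) (x0 : Ω) (a b : ℝ) :
    IsCompact {h : C(Ω, ℝ) | (∀ x y, |h x - h y| ≤ ω (dist x y)) ∧ h x0 ∈ Icc a b} := by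
  set D := Metric.diam (univ : Set Ω) with hD
  set lo := a - ω D with hlo
  set hi := b + ω D with hhi
  set S := {h : C(Ω, ℝ) | (∀ x y, |h x - h y| ≤ ω (dist x y)) ∧ h x0 ∈ Icc a b} with hS
  set C := {g : Ω → ℝ | (∀ x y, |g x - g y| ≤ ω (dist x y)) ∧ g x0 ∈ Icc a b} with hC
  have claim1 : ∀ g ∈ C, ∀ x : Ω, g x ∈ Icc lo hi := by
    intro g hg x
    have hd : dist x x0 ≤ D := Metric.dist_le_diam_of_mem
      Metric.isBounded_of_compactSpace (mem_univ x) (mem_univ x0)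
    have hω : ω (dist x x0) ≤ ω D := hmono dist_nonneg (le_trans dist_nonneg hd) hd
    have habs := abs_le.1 (hg.1 x x0)
    have ha := hg.2.1
    have hb := hg.2.2
    constructor
    · simp only [hlo]; linarith [habs.1]
    · simp only [hhi]; linarith [habs.2]
  have claim2 : IsClosed C := by
    have hCeq : C = (⋂ x : Ω, ⋂ y : Ω, {g : Ω → ℝ | |g x - g y| ≤ ω (dist x y)}) ∩
        {g : Ω → ℝ | g x0 ∈ Icc a b} := by
      ext g; simp [hC, mem_iInter]
    rw [hCeq]
    refine IsClosed.inter ?_ (IsClosed.preimage (continuous_apply x0) isClosed_Icc)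
    refine isClosed_iInter fun x => isClosed_iInter fun y => ?_
    exact isClosed_le (Continuous.abs ((continuous_apply x).sub (continuous_apply y)))
      continuous_const
  have claim3 : IsCompact C := by
    refine IsCompact.of_isClosed_subset
      (isCompact_univ_pi fun _ : Ω => isCompact_Icc (a := lo) (b := hi)) claim2 ?_
    intro g hg x _
    exact claim1 g hg x
  have claim4 : DFunLike.coe '' S = C := by
    ext g
    constructor
    · rintro ⟨h, hh, rfl⟩; exact hh
    · intro hg
      have hcg : Continuous g := continuous_of_modulus h0 hcont hg.1
      exact ⟨ContinuousMap.mk g hcg, hg, rfl⟩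
  refine ArzelaAscoli.isCompact_of_equicontinuous S ?_ ?_
  · have : ContinuousMap.toFun '' S = DFunLike.coe '' S := rfl
    rw [this, claim4]; exact claim3
  · have hten : Filter.Tendsto ω (nhds 0) (nhds 0) := by
      have := hcont.tendsto; rwa [h0] at this
    exact Metric.equicontinuous_of_continuity_modulus ω hten _
      (fun x y i => by rw [Real.dist_eq]; exact i.2.1 x y)
end P4
section Edge
variable {Ω : Type*} [MetricSpace Ω] [CompactSpace Ω] [Nonempty Ω]

lemma normalize_edge (c : Ω → Ω → ℝ) (ω : ℝ → ℝ) (x0 : Ω)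
    (hc : Continuous fun p : Ω × Ω => c p.1 p.2)
    (hmono : MonotoneOn ω (Ici (0:ℝ))) (h0 : ω 0 = 0) (hcont : ContinuousAt ω 0)
    (hωc : ∀ p q : Ω × Ω, |c p.1 p.2 - c q.1 q.2| ≤ ω (dist p q))
    (φ0 ψ0 : C(Ω, ℝ)) (hfeas : ∀ x y, φ0 x + ψ0 y ≤ c x y) :
    ∃ Φ2 Ψ1 : C(Ω, ℝ),
      (∀ x, φ0 x ≤ Φ2 x) ∧ (∀ y, ψ0 y ≤ Ψ1 y) ∧
      (∀ x y, Φ2 x + Ψ1 y ≤ c x y) ∧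
      (∀ x y, |Φ2 x - Φ2 y| ≤ ω (dist x y)) ∧
      (∀ x y, |Ψ1 x - Ψ1 y| ≤ ω (dist x y)) ∧
      (Ψ1 x0 + Φ2 x0 ∈ Icc (sInf (range fun x => c x x0) - ω (Metric.diam (univ : Set Ω)))
        (c x0 x0)) ∧
      IsCConcave c (fun x => Φ2 x - Φ2 x0) ∧
      (∀ y, Ψ1 y + Φ2 x0 = ⨅ x, (c x y - (Φ2 x - Φ2 x0))) := by
  obtain ⟨K, hKmem⟩ := (isCompact_range hc.abs).bddAbove
  have hK : ∀ x y, |c x y| ≤ K := fun x y => hKmem ⟨(x, y), rfl⟩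
  have hK' : ∀ x y, |(fun a b => c b a) x y| ≤ K := fun x y => hK y x
  have hφ0 : ∀ x, |φ0 x| ≤ ‖φ0‖ := fun x => φ0.norm_coe_le_norm x
  have hωc' : ∀ p q : Ω × Ω, |(fun a b => c b a) p.1 p.2 - (fun a b => c b a) q.1 q.2|
      ≤ ω (dist p q) := by
    intro p q
    have := hωc (p.2, p.1) (q.2, q.1)
    simpa [Prod.dist_eq, max_comm] using this
  set ψ1 : Ω → ℝ := ctrans c φ0 with hψ1def
  have hψ1mod : ∀ x y, |ψ1 x - ψ1 y| ≤ ω (dist x y) := ctrans_modulus hK hφ0 hωc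
  have hψ1b : ∀ y, |ψ1 y| ≤ K + ‖φ0‖ := ctrans_bound hK hφ0
  set φ2 : Ω → ℝ := ctrans (fun a b => c b a) ψ1 with hφ2def
  have hφ2mod : ∀ x y, |φ2 x - φ2 y| ≤ ω (dist x y) := ctrans_modulus hK' hψ1b hωc'
  have hφ2b : ∀ x, |φ2 x| ≤ K + (K + ‖φ0‖) := ctrans_bound hK' hψ1b
  have key6 : ∀ y, ψ1 y + φ2 x0 = ⨅ x, (c x y - (φ2 x - φ2 x0)) := by
    intro y
    have htri : ctrans c φ2 y = ctrans c φ0 y := triple_ctrans hK hφ0 y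
    have hbb : BddBelow (range fun x => c x y - φ2 x) := bddBelow_ctrans_range hK hφ2b y
    have h4 : (⨅ x, (c x y - φ2 x)) + φ2 x0 = ⨅ x, ((c x y - φ2 x) + φ2 x0) :=
      ciInf_add hbb _
    have h5 : ψ1 y = ⨅ x, (c x y - φ2 x) := by
      rw [hψ1def]
      exact (htri).symm
    rw [h5, h4]
    exact congrArg _ (funext fun x => by ring)
  refine ⟨⟨φ2, continuous_of_modulus h0 hcont hφ2mod⟩,
    ⟨ψ1, continuous_of_modulus h0 hcont hψ1mod⟩, ?_, ?_, ?_, hφ2mod, hψ1mod, ?_, ?_, ?_⟩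
  · -- φ0 ≤ φ2
    intro x
    refine le_double_ctrans hK hψ1b (fun x y => ?_) x
    have := ctrans_le hK hφ0 x y
    simp only [hψ1def] at *
    linarith
  · -- ψ0 ≤ ψ1
    intro y
    refine le_ctrans fun x => ?_
    linarith [hfeas x y]
  · -- feasibility
    intro x y
    have : φ2 x ≤ c x y - ψ1 y := ctrans_le hK' hψ1b y x
    simp only [ContinuousMap.coe_mk]
    linarith
  · -- Icc membership
    simp only [ContinuousMap.coe_mk]
    have hbc : BddBelow (range fun x => c x x0) := by
      refine ⟨-K, fun r ⟨x, hx⟩ => ?_⟩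
      have := (abs_le.1 (hK x x0)).1
      simp only [← hx]; linarith
    constructor
    · rw [key6 x0]
      refine le_ciInf fun x => ?_
      have h1 : sInf (range fun x => c x x0) ≤ c x x0 := csInf_le hbc ⟨x, rfl⟩
      have h2 : φ2 x - φ2 x0 ≤ ω (dist x x0) := le_trans (le_abs_self _) (hφ2mod x x0)
      have h3 : ω (dist x x0) ≤ ω (Metric.diam (univ : Set Ω)) := by
        have hd : dist x x0 ≤ Metric.diam (univ : Set Ω) := Metric.dist_le_diam_of_mem
          Metric.isBounded_of_compactSpace (mem_univ x) (mem_univ x0)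
        exact hmono dist_nonneg (le_trans dist_nonneg hd) hd
      linarith
    · have : φ2 x0 ≤ c x0 x0 - ψ1 x0 := ctrans_le hK' hψ1b x0 x0
      linarith
  · -- c-concavity
    refine ⟨fun y => ψ1 y + φ2 x0, fun x => ?_⟩
    simp only [ContinuousMap.coe_mk]
    have hbb : BddBelow (range fun y => c x y - ψ1 y) := by
      refine ⟨-K - (K + ‖φ0‖), fun r ⟨y, hy⟩ => ?_⟩
      have h1 := (abs_le.1 (hK x y)).1
      have h2 := (abs_le.1 (hψ1b y)).2
      simp only [← hy]; linarith
    have h4 : (⨅ y, (c x y - ψ1 y)) + -(φ2 x0) = ⨅ y, ((c x y - ψ1 y) + -(φ2 x0)) :=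
      ciInf_add hbb _
    have h5 : φ2 x = ⨅ y, (c x y - ψ1 y) := rfl
    rw [sub_eq_add_neg, h5, h4]
    exact congrArg _ (funext fun y => by ring)
  · -- transform identity
    intro y
    simp only [ContinuousMap.coe_mk]
    exact key6 y
end Edge

/-- existence of a maximizer `(φ, ψ)` of the dual problem (R-D) such that
`φ_e` is `f_e`-concave, `ψ_e = (φ_e)^{f_e}` is the `f_e`-transform of `φ_e`, and both
inherit the modulus of continuity `ω_e` of `f_e`. -/
theorem stmt_3 {Ω : Type*} [MetricSpace Ω] [CompactSpace Ω] [Nonempty Ω]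
    (V : Type*) [Fintype V] [DecidableEq V] (E : Finset (V × V))
    (f : V → Ω → ℝ) (c : V × V → Ω → Ω → ℝ) (ω : V × V → ℝ → ℝ)
    (hf : ∀ u : V, LowerSemicontinuous (f u))
    (hc : ∀ e ∈ E, Continuous (fun p : Ω × Ω => c e p.1 p.2))
    (hω : ∀ e ∈ E, MonotoneOn (ω e) (Set.Ici (0 : ℝ)) ∧ ω e 0 = 0 ∧
      ContinuousAt (ω e) 0 ∧
      ∀ p q : Ω × Ω, |c e p.1 p.2 - c e q.1 q.2| ≤ ω e (dist p q)) :
    ∃ φ ψ : V × V → C(Ω, ℝ),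
      (∀ e ∈ E, ∀ x y : Ω, φ e x + ψ e y ≤ c e x y) ∧
      (∑ u : V, sInf (Set.range (fun x : Ω => f u x - Afun E φ ψ u x)) =
        sSup {r : ℝ | ∃ φ' ψ' : V × V → C(Ω, ℝ),
          (∀ e ∈ E, ∀ x y : Ω, φ' e x + ψ' e y ≤ c e x y) ∧
          r = ∑ u : V, sInf (Set.range (fun x : Ω => f u x - Afun E φ' ψ' u x))}) ∧
      (∀ e ∈ E,
        IsCConcave (c e) (φ e) ∧
        (∀ y : Ω, ψ e y = ⨅ x : Ω, (c e x y - φ e x)) ∧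
        (∀ x y : Ω, |φ e x - φ e y| ≤ ω e (dist x y)) ∧
        (∀ x y : Ω, |ψ e x - ψ e y| ≤ ω e (dist x y))) := by
  classical
  set x0 : Ω := Classical.arbitrary Ω with hx0def
  set D : ℝ := Metric.diam (univ : Set Ω) with hDdef
  set K1 : V × V → Set C(Ω, ℝ) := fun e => if e ∈ E then
      {h : C(Ω, ℝ) | (∀ x y, |h x - h y| ≤ ω e (dist x y)) ∧ h x0 ∈ Icc (0:ℝ) 0} else {0}
    with hK1def
  set K2 : V × V → Set C(Ω, ℝ) := fun e => if e ∈ E then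
      {h : C(Ω, ℝ) | (∀ x y, |h x - h y| ≤ ω e (dist x y)) ∧
        h x0 ∈ Icc (sInf (range fun x => c e x x0) - ω e D) (c e x0 x0)} else {0}
    with hK2def
  set Φset : Set ((V × V → C(Ω, ℝ)) × (V × V → C(Ω, ℝ))) :=
    {p | (∀ e, p.1 e ∈ K1 e ∧ p.2 e ∈ K2 e) ∧
      ∀ e ∈ E, ∀ x y, p.1 e x + p.2 e y ≤ c e x y} with hΦdef
  -- normalization procedure
  have normalize : ∀ φ0 ψ0 : V × V → C(Ω, ℝ),
      (∀ e ∈ E, ∀ x y, φ0 e x + ψ0 e y ≤ c e x y) →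
      ∃ φ' ψ' : V × V → C(Ω, ℝ), (φ', ψ') ∈ Φset ∧
        dualVal E f φ0 ψ0 ≤ dualVal E f φ' ψ' ∧
        ∀ e ∈ E, IsCConcave (c e) (φ' e) ∧
          (∀ y, ψ' e y = ⨅ x, (c e x y - φ' e x)) := by
    intro φ0 ψ0 hfeas0
    have hex : ∀ e : V × V, ∃ P : C(Ω, ℝ) × C(Ω, ℝ),
        (e ∈ E → ((∀ x, φ0 e x ≤ P.1 x) ∧ (∀ y, ψ0 e y ≤ P.2 y) ∧
          (∀ x y, P.1 x + P.2 y ≤ c e x y) ∧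
          (∀ x y, |P.1 x - P.1 y| ≤ ω e (dist x y)) ∧
          (∀ x y, |P.2 x - P.2 y| ≤ ω e (dist x y)) ∧
          (P.2 x0 + P.1 x0 ∈ Icc (sInf (range fun x => c e x x0) - ω e D) (c e x0 x0)) ∧
          IsCConcave (c e) (fun x => P.1 x - P.1 x0) ∧
          (∀ y, P.2 y + P.1 x0 = ⨅ x, (c e x y - (P.1 x - P.1 x0))))) ∧
        (e ∉ E → P = (0, 0)) := by
      intro e
      by_cases he : e ∈ E
      · obtain ⟨hm, h00, hct, hωc⟩ := hω e he
        obtain ⟨Φ2, Ψ1, h⟩ := normalize_edge (c e) (ω e) x0 (hc e he) hm h00 hct hωc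
          (φ0 e) (ψ0 e) (hfeas0 e he)
        exact ⟨(Φ2, Ψ1), fun _ => h, fun h' => absurd he h'⟩
      · exact ⟨(0, 0), fun h' => absurd h' he, fun _ => rfl⟩
    choose P hPmem hPnot using hex
    set a : V × V → ℝ := fun e => (P e).1 x0 with hadef
    set φ' : V × V → C(Ω, ℝ) := fun e => (P e).1 - ContinuousMap.const Ω (a e) with hφ'def
    set ψ' : V × V → C(Ω, ℝ) := fun e => (P e).2 + ContinuousMap.const Ω (a e) with hψ'def
    have hφ'app : ∀ e x, φ' e x = (P e).1 x - a e := by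
      intro e x; simp [hφ'def]
    have hψ'app : ∀ e x, ψ' e x = (P e).2 x + a e := by
      intro e x; simp [hψ'def]
    refine ⟨φ', ψ', ⟨fun e => ?_, fun e he x y => ?_⟩, ?_, fun e he => ⟨?_, ?_⟩⟩
    · -- K1 and K2 membership
      constructor
      · by_cases he : e ∈ E
        · have h := hPmem e he
          simp only [hK1def, if_pos he, mem_setOf_eq]
          refine ⟨fun x y => ?_, ?_⟩
          · rw [hφ'app, hφ'app]
            have := h.2.2.2.1 x y
            simpa using this
          · rw [hφ'app]; simp [hadef]
        · have h := hPnot e he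
          simp only [hK1def, if_neg he, mem_singleton_iff]
          ext x
          rw [hφ'app]
          simp [hadef, h]
      · by_cases he : e ∈ E
        · have h := hPmem e he
          simp only [hK2def, if_pos he, mem_setOf_eq]
          refine ⟨fun x y => ?_, ?_⟩
          · rw [hψ'app, hψ'app]
            have := h.2.2.2.2.1 x y
            simpa using this
          · rw [hψ'app]
            exact h.2.2.2.2.2.1
        · have h := hPnot e he
          simp only [hK2def, if_neg he, mem_singleton_iff]
          ext x
          rw [hψ'app]
          simp [hadef, h]
    · -- feasibility
      rw [hφ'app, hψ'app]
      have := (hPmem e he).2.2.1 x y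
      linarith
    · -- value improves
      calc dualVal E f φ0 ψ0 ≤ dualVal E f (fun e => (P e).1) (fun e => (P e).2) :=
            dualVal_mono hf (fun e he x => (hPmem e he).1 x) (fun e he y => (hPmem e he).2.1 y)
        _ = dualVal E f φ' ψ' := (dualVal_shift hf _ _ a).symm
    · -- c-concavity
      have h := (hPmem e he).2.2.2.2.2.2.1
      have hco : ⇑(φ' e) = fun x => (P e).1 x - (P e).1 x0 := funext fun x => hφ'app e x
      rw [hco]
      exact h
    · -- transform identity
      intro y
      have h := (hPmem e he).2.2.2.2.2.2.2 y
      rw [hψ'app]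
      have hco : ∀ x, c e x y - φ' e x = c e x y - ((P e).1 x - (P e).1 x0) := by
        intro x; rw [hφ'app]
      rw [show a e = (P e).1 x0 from rfl] at *
      rw [h]
      exact congrArg _ (funext fun x => (hco x).symm)
  -- compactness of Φset
  have hK1c : ∀ e, IsCompact (K1 e) := by
    intro e
    simp only [hK1def]
    split_ifs with he
    · obtain ⟨hm, h00, hct, _⟩ := hω e he
      exact isCompact_modulusSet hm h00 hct x0 0 0
    · exact isCompact_singleton
  have hK2c : ∀ e, IsCompact (K2 e) := by
    intro e
    simp only [hK2def]
    split_ifs with he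
    · obtain ⟨hm, h00, hct, _⟩ := hω e he
      exact isCompact_modulusSet hm h00 hct x0 _ _
    · exact isCompact_singleton
  have hΦc : IsCompact Φset := by
    have h1 : IsCompact ((univ.pi K1) ×ˢ (univ.pi K2)) :=
      (isCompact_univ_pi hK1c).prod (isCompact_univ_pi hK2c)
    have h2 : IsClosed {p : (V × V → C(Ω, ℝ)) × (V × V → C(Ω, ℝ)) |
        ∀ e ∈ E, ∀ x y, p.1 e x + p.2 e y ≤ c e x y} := by
      have heq : {p : (V × V → C(Ω, ℝ)) × (V × V → C(Ω, ℝ)) |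
          ∀ e ∈ E, ∀ x y, p.1 e x + p.2 e y ≤ c e x y} =
          ⋂ (e : V × V) (_ : e ∈ E) (x : Ω) (y : Ω),
            {p : (V × V → C(Ω, ℝ)) × (V × V → C(Ω, ℝ)) |
              p.1 e x + p.2 e y ≤ c e x y} := by
        ext p; simp only [mem_setOf_eq, mem_iInter]
      rw [heq]
      refine isClosed_iInter fun e => isClosed_iInter fun he =>
        isClosed_iInter fun x => isClosed_iInter fun y => isClosed_le ?_ continuous_const
      have hev1 : Continuous fun p : (V × V → C(Ω, ℝ)) × (V × V → C(Ω, ℝ)) => p.1 e x :=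
        (continuous_eval_const x).comp ((continuous_apply e).comp continuous_fst)
      have hev2 : Continuous fun p : (V × V → C(Ω, ℝ)) × (V × V → C(Ω, ℝ)) => p.2 e y :=
        (continuous_eval_const y).comp ((continuous_apply e).comp continuous_snd)
      exact hev1.add hev2
    have heq2 : Φset = ((univ.pi K1) ×ˢ (univ.pi K2)) ∩
        {p : (V × V → C(Ω, ℝ)) × (V × V → C(Ω, ℝ)) |
          ∀ e ∈ E, ∀ x y, p.1 e x + p.2 e y ≤ c e x y} := by
      ext p
      simp only [hΦdef, mem_setOf_eq, mem_inter_iff, mem_prod, mem_pi, mem_univ,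
        forall_const, true_implies]
      constructor
      · rintro ⟨h1', h2'⟩
        exact ⟨⟨fun e => (h1' e).1, fun e => (h1' e).2⟩, h2'⟩
      · rintro ⟨⟨ha', hb'⟩, h2'⟩
        exact ⟨fun e => ⟨ha' e, hb' e⟩, h2'⟩
    rw [heq2]
    exact h1.inter_right h2
  -- trivial feasible pair
  have htriv : ∀ e ∈ E, ∀ x y : Ω,
      (0 : C(Ω, ℝ)) x + (ContinuousMap.const Ω (sInf (range fun p : Ω × Ω => c e p.1 p.2))) y
        ≤ c e x y := by
    intro e he x y
    have hb : BddBelow (range fun p : Ω × Ω => c e p.1 p.2) := (isCompact_range (hc e he)).bddBelow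
    have := csInf_le hb ⟨(x, y), rfl⟩
    simpa using this
  obtain ⟨φ1, ψ1, hΦ1, _, _⟩ := normalize (fun _ => 0)
    (fun e => ContinuousMap.const Ω (sInf (range fun p : Ω × Ω => c e p.1 p.2))) htriv
  have hΦne : Φset.Nonempty := ⟨(φ1, ψ1), hΦ1⟩
  -- maximizer over Φset
  obtain ⟨p, hpΦ, hpmax⟩ := hΦc.exists_isMaxOn hΦne
    ((continuous_dualVal (E := E) hf).continuousOn)
  obtain ⟨φ, ψ, hΦm, hval, hreg⟩ := normalize p.1 p.2 hpΦ.2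
  have hfeasφψ : ∀ e ∈ E, ∀ x y, φ e x + ψ e y ≤ c e x y := hΦm.2
  have hveq : dualVal E f φ ψ = dualVal E f p.1 p.2 :=
    le_antisymm (isMaxOn_iff.1 hpmax (φ, ψ) hΦm) hval
  -- the value set
  set SV : Set ℝ := {r : ℝ | ∃ φ' ψ' : V × V → C(Ω, ℝ),
      (∀ e ∈ E, ∀ x y : Ω, φ' e x + ψ' e y ≤ c e x y) ∧
      r = ∑ u : V, sInf (Set.range (fun x : Ω => f u x - Afun E φ' ψ' u x))} with hSVdef
  have hmemSV : dualVal E f φ ψ ∈ SV := ⟨φ, ψ, hfeasφψ, rfl⟩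
  have hSVne : SV.Nonempty := ⟨_, hmemSV⟩
  have hbddSV : BddAbove SV := by
    refine ⟨(∑ u : V, f u x0) + ∑ e ∈ E, c e x0 x0, ?_⟩
    rintro r ⟨φ', ψ', hfe, rfl⟩
    have h1 : ∀ u : V, sInf (Set.range fun x : Ω => f u x - Afun E φ' ψ' u x) ≤
        f u x0 - Afun E φ' ψ' u x0 :=
      fun u => csInf_le (bdd_fsub (hf u) _) ⟨x0, rfl⟩
    have h2 : (∑ u : V, sInf (Set.range fun x : Ω => f u x - Afun E φ' ψ' u x)) ≤
        ∑ u : V, (f u x0 - Afun E φ' ψ' u x0) := Finset.sum_le_sum fun u _ => h1 u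
    have h3 : ∀ u : V, f u x0 - Afun E φ' ψ' u x0 = f u x0 +
        ((∑ e ∈ E.filter (fun e => e.1 = u), φ' e x0) +
         (∑ e ∈ E.filter (fun e => e.2 = u), ψ' e x0)) := by
      intro u; rw [Afun_apply]; ring
    have h4 : (∑ u : V, (f u x0 - Afun E φ' ψ' u x0)) =
        (∑ u : V, f u x0) + ((∑ e ∈ E, φ' e x0) + (∑ e ∈ E, ψ' e x0)) := by
      rw [Finset.sum_congr rfl fun u _ => h3 u, Finset.sum_add_distrib,
        Finset.sum_add_distrib, Finset.sum_fiberwise E (fun e => e.1) (fun e => φ' e x0),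
        Finset.sum_fiberwise E (fun e => e.2) (fun e => ψ' e x0)]
    have h5 : (∑ e ∈ E, φ' e x0) + (∑ e ∈ E, ψ' e x0) ≤ ∑ e ∈ E, c e x0 x0 := by
      rw [← Finset.sum_add_distrib]
      exact Finset.sum_le_sum fun e he => hfe e he x0 x0
    calc (∑ u : V, sInf (Set.range fun x : Ω => f u x - Afun E φ' ψ' u x)) ≤
          ∑ u : V, (f u x0 - Afun E φ' ψ' u x0) := h2
      _ = (∑ u : V, f u x0) + ((∑ e ∈ E, φ' e x0) + (∑ e ∈ E, ψ' e x0)) := h4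
      _ ≤ (∑ u : V, f u x0) + ∑ e ∈ E, c e x0 x0 := by linarith
  have hub : ∀ r ∈ SV, r ≤ dualVal E f φ ψ := by
    rintro r ⟨φ0, ψ0, hfe0, rfl⟩
    obtain ⟨φ2, ψ2, hΦ2, hval2, _⟩ := normalize φ0 ψ0 hfe0
    calc (∑ u : V, sInf (Set.range fun x : Ω => f u x - Afun E φ0 ψ0 u x)) =
          dualVal E f φ0 ψ0 := rfl
      _ ≤ dualVal E f φ2 ψ2 := hval2
      _ ≤ dualVal E f p.1 p.2 := isMaxOn_iff.1 hpmax (φ2, ψ2) hΦ2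
      _ = dualVal E f φ ψ := hveq.symm
  have hsup : dualVal E f φ ψ = sSup SV :=
    le_antisymm (le_csSup hbddSV hmemSV) (csSup_le hSVne hub)
  refine ⟨φ, ψ, hfeasφψ, hsup, fun e he => ?_⟩
  have hreg' := hreg e he
  have hK1m := (hΦm.1 e).1
  have hK2m := (hΦm.1 e).2
  rw [hK1def] at hK1m
  rw [hK2def] at hK2m
  simp only [if_pos he, mem_setOf_eq] at hK1m hK2m
  exact ⟨hreg'.1, hreg'.2, hK1m.1, hK2m.1⟩
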